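/- arXiv:1205.1031 — 2 statements merged into one kernel-verified Lean document; each statement's English description precedes it below -/
import Mathlib

section
/- Let ρ₁,…,ρ_k be density operators of maximally entangled states on ℂᵈ⊗ℂᵈ, and let P₁,…,P_k be positive semidefinite operators with T_A(Pⱼ) positive semidefinite for each j and P₁+⋯+P_k = I. Then (1/k)·Σⱼ ⟨Pⱼ, ρⱼ⟩ ≤ d/k. In particular, if k > d, no PPT measurement distinguishes the states perfectly. -/
open Matrix
open scoped ComplexOrder

/-- Partial transpose on the first tensor factor. -/
def PT {d : ℕ} (X : Matrix (Fin d × Fin d) (Fin d × Fin d) ℂ) :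
    Matrix (Fin d × Fin d) (Fin d × Fin d) ℂ :=
  fun p q => X (q.1, p.2) (p.1, q.2)

/-- `u` is a maximally entangled unit vector of `ℂᵈ ⊗ ℂᵈ`. -/
def IsMaxEnt {d : ℕ} (u : Fin d × Fin d → ℂ) : Prop :=
  ∃ V ∈ Matrix.unitaryGroup (Fin d) ℂ,
    u = fun p => (1 / Real.sqrt d : ℂ) * V p.2 p.1

lemma trace_PT {d : ℕ} (X : Matrix (Fin d × Fin d) (Fin d × Fin d) ℂ) :
    (PT X).trace = X.trace := rfl

lemma trace_PT_mul {d : ℕ} (X Y : Matrix (Fin d × Fin d) (Fin d × Fin d) ℂ) :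
    ((PT X) * (PT Y)).trace = (X * Y).trace := by
  have hinv : Function.Involutive
      (fun x : (Fin d × Fin d) × (Fin d × Fin d) =>
        (((x.2.1, x.1.2) : Fin d × Fin d), ((x.1.1, x.2.2) : Fin d × Fin d))) := by
    intro x; rfl
  simp only [Matrix.trace, Matrix.diag, Matrix.mul_apply, PT]
  have L : ∑ x : (Fin d × Fin d) × (Fin d × Fin d),
      X (x.2.1, x.1.2) (x.1.1, x.2.2) * Y (x.1.1, x.2.2) (x.2.1, x.1.2)
      = ∑ p : Fin d × Fin d, ∑ q : Fin d × Fin d,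
        X (q.1, p.2) (p.1, q.2) * Y (p.1, q.2) (q.1, p.2) := Fintype.sum_prod_type _
  have R : ∑ x : (Fin d × Fin d) × (Fin d × Fin d), X x.1 x.2 * Y x.2 x.1
      = ∑ a : Fin d × Fin d, ∑ b : Fin d × Fin d, X a b * Y b a := Fintype.sum_prod_type _
  rw [← L, ← R]
  exact Fintype.sum_equiv hinv.toPerm _ _ (fun x => rfl)

lemma diag_nonneg_of_psd {n : Type*} [Fintype n] [DecidableEq n]
    {M : Matrix n n ℂ} (hM : M.PosSemidef) (i : n) : 0 ≤ M i i := by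
  exact hM.diag_nonneg

lemma trace_mul_psd_nonneg {n : Type*} [Fintype n] [DecidableEq n]
    {A B : Matrix n n ℂ} (hA : A.PosSemidef) (hB : B.PosSemidef) :
    0 ≤ (A * B).trace := by
  obtain ⟨C, hC⟩ : ∃ C : Matrix n n ℂ, B = Cᴴ * C := by
    open scoped MatrixOrder in
    obtain ⟨X, hX, -, hXX⟩ :=
      sub_zero B ▸ CFC.exists_sqrt_of_isSelfAdjoint_of_quasispectrumRestricts hB.isHermitian
        (QuasispectrumRestricts.nnreal_of_nonneg hB.nonneg)
    exact ⟨X, by rw [← Matrix.star_eq_conjTranspose, hX.star_eq, hXX, sub_zero]⟩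
  have h1 : (A * B).trace = (C * A * Cᴴ).trace := by
    rw [hC, ← Matrix.mul_assoc, Matrix.trace_mul_comm, Matrix.mul_assoc]
  have h2 : (C * A * Cᴴ).PosSemidef := hA.mul_mul_conjTranspose_same C
  rw [h1]
  exact Finset.sum_nonneg fun i _ => diag_nonneg_of_psd h2 i

lemma re_trace_mul_unitary_le {n : Type*} [Fintype n] [DecidableEq n]
    {M W : Matrix n n ℂ} (hM : M.PosSemidef) (hW : W * Wᴴ = 1) :
    ((M * W).trace).re ≤ (M.trace).re := by
  have hN : ((1 - W) * (1 - W)ᴴ).PosSemidef := Matrix.posSemidef_self_mul_conjTranspose _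
  have hexp : (1 - W) * (1 - W)ᴴ = 1 + 1 - W - Wᴴ := by
    simp only [conjTranspose_sub, conjTranspose_one, Matrix.sub_mul, Matrix.mul_sub,
      Matrix.mul_one, Matrix.one_mul, hW]
    abel
  have hTr : 0 ≤ (M * ((1 - W) * (1 - W)ᴴ)).trace := trace_mul_psd_nonneg hM hN
  have hMWH : (M * Wᴴ).trace = star ((M * W).trace) := by
    have : (M * Wᴴ) = (W * M)ᴴ := by rw [conjTranspose_mul, hM.1]
    rw [this, Matrix.trace_conjTranspose, Matrix.trace_mul_comm]
  have hsplit : (M * ((1 - W) * (1 - W)ᴴ)).trace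
      = M.trace + M.trace - (M * W).trace - star ((M * W).trace) := by
    rw [hexp, Matrix.mul_sub, Matrix.mul_sub, Matrix.mul_add, Matrix.mul_one,
      Matrix.trace_sub, Matrix.trace_sub, Matrix.trace_add, hMWH]
  rw [hsplit] at hTr
  have := (Complex.le_def.mp hTr).1
  simp only [Complex.zero_re, Complex.sub_re, Complex.add_re, RCLike.star_def, Complex.conj_re] at this
  linarith

/-- No PPT measurement can distinguish `k` maximally entangled states in
`ℂᵈ ⊗ ℂᵈ` with average success probability better than `d/k`. -/
theorem ppt_bound_maxEnt {d k : ℕ} (hd : 0 < d) (hk : 0 < k)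
    (ρ : Fin k → Matrix (Fin d × Fin d) (Fin d × Fin d) ℂ)
    (hρ : ∀ j, ∃ u : Fin d × Fin d → ℂ, IsMaxEnt u ∧ ρ j = Matrix.vecMulVec u (star u))
    (P : Fin k → Matrix (Fin d × Fin d) (Fin d × Fin d) ℂ)
    (hP : ∀ j, (P j).PosSemidef) (hPT : ∀ j, (PT (P j)).PosSemidef)
    (hsum : ∑ j, P j = 1) :
    (1 / k : ℝ) * ∑ j, (Matrix.trace ((P j)ᴴ * ρ j)).re ≤ (d : ℝ) / k := by
  have hd' : (0 : ℝ) < d := Nat.cast_pos.mpr hd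
  -- per-j bound
  have key : ∀ j, ((Matrix.trace ((P j)ᴴ * ρ j))).re ≤ (1 / d : ℝ) * ((P j).trace).re := by
    intro j
    obtain ⟨u, ⟨V, hV, hu⟩, hrho⟩ := hρ j
    set W : Matrix (Fin d × Fin d) (Fin d × Fin d) ℂ :=
      fun p q => V p.2 q.1 * star (V q.2 p.1) with hWdef
    have hVV : V * Vᴴ = 1 := (Matrix.mem_unitaryGroup_iff.mp hV)
    have hVV' : Vᴴ * V = 1 := (Matrix.mem_unitaryGroup_iff'.mp hV)
    have hc : ((1 / Real.sqrt d : ℂ)) * star ((1 / Real.sqrt d : ℂ)) = 1 / (d : ℂ) := by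
      have : (starRingEnd ℂ) ((Real.sqrt d : ℝ) : ℂ) = ((Real.sqrt d : ℝ) : ℂ) :=
        Complex.conj_ofReal _
      simp only [one_div, star_inv₀, RCLike.star_def, this]
      rw [← mul_inv, ← Complex.ofReal_mul, Real.mul_self_sqrt (Nat.cast_nonneg d)]
      push_cast
      ring
    -- PT of rho
    have hPTrho : PT (ρ j) = (1 / (d : ℂ)) • W := by
      ext p q
      simp only [PT, hrho, Matrix.vecMulVec_apply, hu, Pi.star_apply, Matrix.smul_apply, Pi.smul_apply,
        smul_eq_mul, hWdef, star_mul']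
      rw [show (1 / Real.sqrt d : ℂ) * V p.2 q.1 *
          (star (1 / Real.sqrt d : ℂ) * star (V q.2 p.1))
        = ((1 / Real.sqrt d : ℂ) * star (1 / Real.sqrt d : ℂ))
          * (V p.2 q.1 * star (V q.2 p.1)) by ring, hc]
      rfl
    -- W is unitary
    have hWW : W * Wᴴ = 1 := by
      ext p r
      rw [Matrix.mul_apply]
      have : ∀ q : Fin d × Fin d, W p q * Wᴴ q r
          = (V p.2 q.1 * star (V r.2 q.1)) * (star (V q.2 p.1) * V q.2 r.1) := by
        intro q
        simp only [hWdef, Matrix.conjTranspose, Matrix.transpose, Matrix.map_apply, Matrix.of_apply, star_mul', star_star]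
        ring
      rw [Finset.sum_congr rfl (fun q _ => this q)]
      have hsum2 : ∑ q : Fin d × Fin d,
          V p.2 q.1 * star (V r.2 q.1) * (star (V q.2 p.1) * V q.2 r.1)
          = ∑ q1 : Fin d, ∑ q2 : Fin d,
            V p.2 q1 * star (V r.2 q1) * (star (V q2 p.1) * V q2 r.1) :=
        Fintype.sum_prod_type _
      rw [hsum2, ← Finset.sum_mul_sum]
      have e1 : ∑ q1, V p.2 q1 * star (V r.2 q1) = (V * Vᴴ) p.2 r.2 := by
        simp [Matrix.mul_apply, Matrix.conjTranspose_apply]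
      have e2 : ∑ q2, star (V q2 p.1) * V q2 r.1 = (Vᴴ * V) p.1 r.1 := by
        simp [Matrix.mul_apply, Matrix.conjTranspose_apply]
      rw [e1, e2, hVV, hVV']
      by_cases h : p = r
      · subst h; simp [Matrix.one_apply]
      · rcases Prod.mk.injEq p.1 p.2 r.1 r.2 ▸ (by simpa [Prod.ext_iff] using h :
          ¬(p.1 = r.1 ∧ p.2 = r.2)) with _
        rw [Matrix.one_apply_ne h]
        by_cases h1 : p.1 = r.1
        · have h2 : p.2 ≠ r.2 := fun h2 => h (Prod.ext h1 h2)
          simp [Matrix.one_apply, h1, h2]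
        · simp [Matrix.one_apply, h1]
    -- chain of trace equalities
    have step1 : Matrix.trace ((P j)ᴴ * ρ j) = Matrix.trace (P j * ρ j) := by
      rw [(hP j).1]
    have step2 : Matrix.trace (P j * ρ j) = Matrix.trace (PT (P j) * PT (ρ j)) :=
      (trace_PT_mul _ _).symm
    have step3 : Matrix.trace (PT (P j) * PT (ρ j))
        = (1 / (d : ℂ)) * Matrix.trace (PT (P j) * W) := by
      rw [hPTrho, Matrix.mul_smul, Matrix.trace_smul, smul_eq_mul]
    have hre : (Matrix.trace ((P j)ᴴ * ρ j)).re
        = (1 / d : ℝ) * (Matrix.trace (PT (P j) * W)).re := by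
      rw [step1, step2, step3]
      have : (1 / (d : ℂ)) = ((1 / d : ℝ) : ℂ) := by push_cast; ring
      rw [this, Complex.re_ofReal_mul]
    rw [hre]
    have hb := re_trace_mul_unitary_le (hPT j) hWW
    have : (Matrix.trace (PT (P j))).re = ((P j).trace).re := by rw [trace_PT]
    have h1d : (0 : ℝ) ≤ 1 / d := by positivity
    calc (1 / d : ℝ) * (Matrix.trace (PT (P j) * W)).re
        ≤ (1 / d : ℝ) * (Matrix.trace (PT (P j))).re := by
          exact mul_le_mul_of_nonneg_left hb h1d
      _ = (1 / d : ℝ) * ((P j).trace).re := by rw [this]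
  -- sum of traces
  have hsumtr : ∑ j, ((P j).trace).re = (d : ℝ) * d := by
    have : ∑ j, (P j).trace = ((d : ℂ) * d) := by
      rw [← Matrix.trace_sum, hsum, Matrix.trace_one]
      simp [Fintype.card_prod]
    calc ∑ j, ((P j).trace).re = (∑ j, (P j).trace).re := by
          rw [Complex.re_sum]
      _ = (d : ℝ) * d := by rw [this]; push_cast; simp
  have hsumle : ∑ j, (Matrix.trace ((P j)ᴴ * ρ j)).re ≤ (d : ℝ) := by
    calc ∑ j, (Matrix.trace ((P j)ᴴ * ρ j)).re
        ≤ ∑ j, (1 / d : ℝ) * ((P j).trace).re := Finset.sum_le_sum fun j _ => key j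
      _ = (1 / d : ℝ) * ∑ j, ((P j).trace).re := by rw [Finset.mul_sum]
      _ = (1 / d : ℝ) * ((d : ℝ) * d) := by rw [hsumtr]
      _ = (d : ℝ) := by field_simp
  have hk' : (0 : ℝ) < k := Nat.cast_pos.mpr hk
  calc (1 / k : ℝ) * ∑ j, (Matrix.trace ((P j)ᴴ * ρ j)).re
      ≤ (1 / k : ℝ) * d := mul_le_mul_of_nonneg_left hsumle (by positivity)
    _ = (d : ℝ) / k := by ring
end

section
/- The operator Y = (1/4)·I₁₆ − (1/2)·(ψ₂⊗ψ₁) on (ℂ²⊗ℂ²)⊗(ℂ²⊗ℂ²) satisfies Y ≥ T_A(ρⱼ) for each of the four states ρ₁ = ψ₀⊗ψ₀, ρ₂ = ψ₁⊗ψ₃, ρ₃ = ψ₂⊗ψ₃, ρ₄ = ψ₃⊗ψ₃, where T_A is the partial transpose acting on both Alice qubits (i.e., T_A(α⊗β) = T_A(α)⊗T_A(β) for the single-qubit partial transposes). Moreover Tr(Y) = 7/2. -/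
open Matrix

noncomputable def pauli : Fin 4 → Matrix (Fin 2) (Fin 2) ℂ
  | 0 => 1
  | 1 => !![0, 1; 1, 0]
  | 2 => !![0, -Complex.I; Complex.I, 0]
  | 3 => !![1, 0; 0, -1]

/-- Density operator of the Bell state `|ψᵢ⟩ = (1 ⊗ σᵢ)|ψ₀⟩`,
`|ψ₀⟩ = (|00⟩+|11⟩)/√2`, as a matrix on `ℂ² ⊗ ℂ²`. -/
noncomputable def bell (i : Fin 4) :
    Matrix (Fin 2 × Fin 2) (Fin 2 × Fin 2) ℂ :=
  fun p q => (1 / 2 : ℂ) * pauli i p.2 p.1 * (starRingEnd ℂ) (pauli i q.2 q.1)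

open Kronecker
open scoped ComplexOrder

/-- Partial transpose on both of Alice's qubits, acting factorwise on
`(ℂ²⊗ℂ²) ⊗ (ℂ²⊗ℂ²)`. -/
def PT2 (X : Matrix ((Fin 2 × Fin 2) × (Fin 2 × Fin 2))
    ((Fin 2 × Fin 2) × (Fin 2 × Fin 2)) ℂ) :
    Matrix ((Fin 2 × Fin 2) × (Fin 2 × Fin 2)) ((Fin 2 × Fin 2) × (Fin 2 × Fin 2)) ℂ :=
  fun p q => X ((q.1.1, p.1.2), (q.2.1, p.2.2)) ((p.1.1, q.1.2), (p.2.1, q.2.2))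

/-- The four states of Yu–Duan–Ying's example. -/
noncomputable def ydy : Fin 4 → Matrix ((Fin 2 × Fin 2) × (Fin 2 × Fin 2))
    ((Fin 2 × Fin 2) × (Fin 2 × Fin 2)) ℂ
  | 0 => bell 0 ⊗ₖ bell 0
  | 1 => bell 1 ⊗ₖ bell 3
  | 2 => bell 2 ⊗ₖ bell 3
  | 3 => bell 3 ⊗ₖ bell 3

/- ### Auxiliary lemmas -/

noncomputable def rk (a b : Fin 4) :
    Matrix (Fin 1) ((Fin 2 × Fin 2) × (Fin 2 × Fin 2)) ℂ :=
  fun _ p => ((1 + Complex.I) / 4) *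
    (starRingEnd ℂ) (pauli a p.1.2 p.1.1 * pauli b p.2.2 p.2.1)

lemma halfKron_eq (a b : Fin 4) :
    (1 / 2 : ℂ) • (bell a ⊗ₖ bell b) = (rk a b)ᴴ * (rk a b) := by
  ext p q
  simp only [Matrix.mul_apply, Fin.sum_univ_one, conjTranspose_apply, rk, bell,
    Matrix.smul_apply, kroneckerMap_apply, smul_eq_mul, star_mul', _root_.map_mul, map_div₀,
    map_add, _root_.map_one, Complex.conj_I, map_ofNat, Complex.conj_conj,
    RingHom.id_apply, Complex.star_def]
  linear_combination ((pauli a p.1.2 p.1.1 * (starRingEnd ℂ) (pauli a q.1.2 q.1.1) *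
    pauli b p.2.2 p.2.1 * (starRingEnd ℂ) (pauli b q.2.2 q.2.1)) / 16) * Complex.I_sq

lemma halfKron_psd (a b : Fin 4) :
    ((1 / 2 : ℂ) • (bell a ⊗ₖ bell b)).PosSemidef := by
  rw [halfKron_eq]; exact posSemidef_conjTranspose_mul_self _

lemma sum_bell : bell 0 + bell 1 + bell 2 + bell 3 = 1 := by
  ext p q
  fin_cases p <;> fin_cases q <;>
    norm_num [bell, pauli, Matrix.one_apply, Complex.ext_iff, Prod.ext_iff]

lemma pt_bell0 : PT (bell 0) = (1 / 2 : ℂ) • 1 - bell 2 := by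
  ext p q
  fin_cases p <;> fin_cases q <;>
    norm_num [bell, pauli, PT, Matrix.one_apply, Complex.ext_iff, Prod.ext_iff]

lemma pt_bell1 : PT (bell 1) = (1 / 2 : ℂ) • 1 - bell 3 := by
  ext p q
  fin_cases p <;> fin_cases q <;>
    norm_num [bell, pauli, PT, Matrix.one_apply, Complex.ext_iff, Prod.ext_iff]

lemma pt_bell2 : PT (bell 2) = (1 / 2 : ℂ) • 1 - bell 0 := by
  ext p q
  fin_cases p <;> fin_cases q <;>
    norm_num [bell, pauli, PT, Matrix.one_apply, Complex.ext_iff, Prod.ext_iff]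

lemma pt_bell3 : PT (bell 3) = (1 / 2 : ℂ) • 1 - bell 1 := by
  ext p q
  fin_cases p <;> fin_cases q <;>
    norm_num [bell, pauli, PT, Matrix.one_apply, Complex.ext_iff, Prod.ext_iff]

lemma sub_kron (A B C : Matrix (Fin 2 × Fin 2) (Fin 2 × Fin 2) ℂ) :
    (A - B) ⊗ₖ C = A ⊗ₖ C - B ⊗ₖ C := by
  ext p q; simp [Matrix.kroneckerMap_apply, sub_mul]

lemma kron_sub (A B C : Matrix (Fin 2 × Fin 2) (Fin 2 × Fin 2) ℂ) :
    A ⊗ₖ (B - C) = A ⊗ₖ B - A ⊗ₖ C := by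
  ext p q; simp [Matrix.kroneckerMap_apply, mul_sub]

lemma trace_bell (i : Fin 4) : Matrix.trace (bell i) = 1 := by
  fin_cases i <;>
    norm_num [Matrix.trace, Matrix.diag, bell, pauli, Fintype.sum_prod_type,
      Fin.sum_univ_succ, Complex.ext_iff, mul_comm]


lemma h_one16 : (1 : Matrix ((Fin 2 × Fin 2) × (Fin 2 × Fin 2))
    ((Fin 2 × Fin 2) × (Fin 2 × Fin 2)) ℂ)
    = (1 : Matrix (Fin 2 × Fin 2) (Fin 2 × Fin 2) ℂ) ⊗ₖ 1 :=
  (Matrix.one_kronecker_one).symm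

lemma psd0 : ((1 / 4 : ℂ) • (1 : Matrix ((Fin 2 × Fin 2) × (Fin 2 × Fin 2))
    ((Fin 2 × Fin 2) × (Fin 2 × Fin 2)) ℂ)
    - (1 / 2 : ℂ) • (bell 2 ⊗ₖ bell 1) - PT2 (ydy 0)).PosSemidef := by
  have e : (1 / 4 : ℂ) • (1 : Matrix ((Fin 2 × Fin 2) × (Fin 2 × Fin 2))
      ((Fin 2 × Fin 2) × (Fin 2 × Fin 2)) ℂ)
      - (1 / 2 : ℂ) • (bell 2 ⊗ₖ bell 1) - PT2 (ydy 0)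
      = (1 / 2 : ℂ) • (bell 2 ⊗ₖ bell 0) + (1 / 2 : ℂ) • (bell 2 ⊗ₖ bell 3)
        + ((1 / 2 : ℂ) • (bell 0 ⊗ₖ bell 2) + (1 / 2 : ℂ) • (bell 1 ⊗ₖ bell 2)
        + (1 / 2 : ℂ) • (bell 3 ⊗ₖ bell 2)) := by
    rw [show PT2 (ydy 0) = PT (bell 0) ⊗ₖ PT (bell 0) from rfl, pt_bell0, h_one16, ← sum_bell]
    simp only [sub_kron, kron_sub, Matrix.add_kronecker, Matrix.kronecker_add,
      Matrix.smul_kronecker, Matrix.kronecker_smul]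
    module
  rw [e]
  exact (((halfKron_psd 2 0).add (halfKron_psd 2 3)).add
    (((halfKron_psd 0 2).add (halfKron_psd 1 2)).add (halfKron_psd 3 2)))

lemma psd1 : ((1 / 4 : ℂ) • (1 : Matrix ((Fin 2 × Fin 2) × (Fin 2 × Fin 2))
    ((Fin 2 × Fin 2) × (Fin 2 × Fin 2)) ℂ)
    - (1 / 2 : ℂ) • (bell 2 ⊗ₖ bell 1) - PT2 (ydy 1)).PosSemidef := by
  have e : (1 / 4 : ℂ) • (1 : Matrix ((Fin 2 × Fin 2) × (Fin 2 × Fin 2))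
      ((Fin 2 × Fin 2) × (Fin 2 × Fin 2)) ℂ)
      - (1 / 2 : ℂ) • (bell 2 ⊗ₖ bell 1) - PT2 (ydy 1)
      = (1 / 2 : ℂ) • (bell 3 ⊗ₖ bell 0) + (1 / 2 : ℂ) • (bell 3 ⊗ₖ bell 2)
        + ((1 / 2 : ℂ) • (bell 3 ⊗ₖ bell 3) + (1 / 2 : ℂ) • (bell 0 ⊗ₖ bell 1)
        + (1 / 2 : ℂ) • (bell 1 ⊗ₖ bell 1)) := by
    rw [show PT2 (ydy 1) = PT (bell 1) ⊗ₖ PT (bell 3) from rfl, pt_bell1, pt_bell3,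
      h_one16, ← sum_bell]
    simp only [sub_kron, kron_sub, Matrix.add_kronecker, Matrix.kronecker_add,
      Matrix.smul_kronecker, Matrix.kronecker_smul]
    module
  rw [e]
  exact (((halfKron_psd 3 0).add (halfKron_psd 3 2)).add
    (((halfKron_psd 3 3).add (halfKron_psd 0 1)).add (halfKron_psd 1 1)))

lemma psd2 : ((1 / 4 : ℂ) • (1 : Matrix ((Fin 2 × Fin 2) × (Fin 2 × Fin 2))
    ((Fin 2 × Fin 2) × (Fin 2 × Fin 2)) ℂ)
    - (1 / 2 : ℂ) • (bell 2 ⊗ₖ bell 1) - PT2 (ydy 2)).PosSemidef := by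
  have e : (1 / 4 : ℂ) • (1 : Matrix ((Fin 2 × Fin 2) × (Fin 2 × Fin 2))
      ((Fin 2 × Fin 2) × (Fin 2 × Fin 2)) ℂ)
      - (1 / 2 : ℂ) • (bell 2 ⊗ₖ bell 1) - PT2 (ydy 2)
      = (1 / 2 : ℂ) • (bell 0 ⊗ₖ bell 0) + (1 / 2 : ℂ) • (bell 0 ⊗ₖ bell 2)
        + ((1 / 2 : ℂ) • (bell 0 ⊗ₖ bell 3) + (1 / 2 : ℂ) • (bell 1 ⊗ₖ bell 1)
        + (1 / 2 : ℂ) • (bell 3 ⊗ₖ bell 1)) := by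
    rw [show PT2 (ydy 2) = PT (bell 2) ⊗ₖ PT (bell 3) from rfl, pt_bell2, pt_bell3,
      h_one16, ← sum_bell]
    simp only [sub_kron, kron_sub, Matrix.add_kronecker, Matrix.kronecker_add,
      Matrix.smul_kronecker, Matrix.kronecker_smul]
    module
  rw [e]
  exact (((halfKron_psd 0 0).add (halfKron_psd 0 2)).add
    (((halfKron_psd 0 3).add (halfKron_psd 1 1)).add (halfKron_psd 3 1)))

lemma psd3 : ((1 / 4 : ℂ) • (1 : Matrix ((Fin 2 × Fin 2) × (Fin 2 × Fin 2))
    ((Fin 2 × Fin 2) × (Fin 2 × Fin 2)) ℂ)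
    - (1 / 2 : ℂ) • (bell 2 ⊗ₖ bell 1) - PT2 (ydy 3)).PosSemidef := by
  have e : (1 / 4 : ℂ) • (1 : Matrix ((Fin 2 × Fin 2) × (Fin 2 × Fin 2))
      ((Fin 2 × Fin 2) × (Fin 2 × Fin 2)) ℂ)
      - (1 / 2 : ℂ) • (bell 2 ⊗ₖ bell 1) - PT2 (ydy 3)
      = (1 / 2 : ℂ) • (bell 1 ⊗ₖ bell 0) + (1 / 2 : ℂ) • (bell 1 ⊗ₖ bell 2)
        + ((1 / 2 : ℂ) • (bell 1 ⊗ₖ bell 3) + (1 / 2 : ℂ) • (bell 0 ⊗ₖ bell 1)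
        + (1 / 2 : ℂ) • (bell 3 ⊗ₖ bell 1)) := by
    rw [show PT2 (ydy 3) = PT (bell 3) ⊗ₖ PT (bell 3) from rfl, pt_bell3,
      h_one16, ← sum_bell]
    simp only [sub_kron, kron_sub, Matrix.add_kronecker, Matrix.kronecker_add,
      Matrix.smul_kronecker, Matrix.kronecker_smul]
    module
  rw [e]
  exact (((halfKron_psd 1 0).add (halfKron_psd 1 2)).add
    (((halfKron_psd 1 3).add (halfKron_psd 0 1)).add (halfKron_psd 3 1)))

/-- The dual feasible operator `Y = (1/4)·1 − (1/2)·(ψ₂⊗ψ₁)` dominates the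
partial transposes of the four states, and has trace `7/2`. -/
theorem ydy_dual_feasible :
    (∀ j : Fin 4,
      ((1 / 4 : ℂ) • (1 : Matrix ((Fin 2 × Fin 2) × (Fin 2 × Fin 2))
          ((Fin 2 × Fin 2) × (Fin 2 × Fin 2)) ℂ)
        - (1 / 2 : ℂ) • (bell 2 ⊗ₖ bell 1) - PT2 (ydy j)).PosSemidef) ∧
    Matrix.trace ((1 / 4 : ℂ) • (1 : Matrix ((Fin 2 × Fin 2) × (Fin 2 × Fin 2))
          ((Fin 2 × Fin 2) × (Fin 2 × Fin 2)) ℂ)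
        - (1 / 2 : ℂ) • (bell 2 ⊗ₖ bell 1)) = 7 / 2 := by
  constructor
  · intro j
    fin_cases j
    exacts [psd0, psd1, psd2, psd3]
  · rw [Matrix.trace_sub, Matrix.trace_smul, Matrix.trace_smul, Matrix.trace_one,
      Matrix.trace_kronecker, trace_bell, trace_bell]
    norm_num [Fintype.card_prod]
end
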